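/- If P_⊥(G(x) + (1/2)x·∇G(x))P_⊥ ≥ c̄ P_⊥ G(x) P_⊥ holds for all x ≠ 0 with c̄ > 0, and G(x) = P + P_⊥ G(x) P_⊥ with a|y|² ≤ y·G(x)y, then necessarily c̄ ≤ 1. -/

import Mathlib

/-- The rank-one projection `P(x̂) = |x̂⟩⟨x̂|` as a matrix: entries `x_i x_j / |x|²`. -/
noncomputable def projMat (d : ℕ) (x : Fin d → ℝ) : Matrix (Fin d) (Fin d) ℝ :=
  Matrix.of fun i j => x i * x j / (∑ k, x k ^ 2)

/-- If the convexity condition `P_⊥(G + ½ x·∇G)P_⊥ ≥ c̄ P_⊥ G P_⊥` holds for a metric of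
order zero with the radial block decomposition, then necessarily `c̄ ≤ 1`. -/
theorem stmt_11 (d : ℕ) (hd : 2 ≤ d) (a b cbar C : ℝ) (ha : 0 < a) (hb : 0 < b)
    (hcbar : 0 < cbar) (hC : 0 < C)
    (G : (Fin d → ℝ) → Matrix (Fin d) (Fin d) ℝ)
    (hGdiff : ∀ i j, Differentiable ℝ fun z => G z i j)
    (hGsymm : ∀ z, (G z).IsSymm)
    (hell : ∀ z y : Fin d → ℝ,
      a * ∑ i, y i ^ 2 ≤ dotProduct y ((G z).mulVec y) ∧
      dotProduct y ((G z).mulVec y) ≤ b * ∑ i, y i ^ 2)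
    (hdec : ∀ z : Fin d → ℝ, z ≠ 0 →
      G z = projMat d z + (1 - projMat d z) * G z * (1 - projMat d z))
    (hbd : ∀ z : Fin d → ℝ, ∀ i j, |G z i j| ≤ C ∧
      ‖fderiv ℝ (fun w => G w i j) z‖ ≤ C / (1 + ‖z‖))
    (hconv : ∀ z : Fin d → ℝ, z ≠ 0 → ∀ y : Fin d → ℝ,
      cbar * dotProduct y
          (((1 - projMat d z) * G z * (1 - projMat d z)).mulVec y) ≤
        dotProduct y
          (((1 - projMat d z) *
              (G z + (1 / 2 : ℝ) •
                Matrix.of fun i j => fderiv ℝ (fun w => G w i j) z z) *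
              (1 - projMat d z)).mulVec y)) :
    cbar ≤ 1 := by
  by_contra hc
  push_neg at hc
  -- indices and vectors
  have h0 : 0 < d := by omega
  have h1 : 1 < d := by omega
  set i0 : Fin d := ⟨0, h0⟩ with hi0
  set i1 : Fin d := ⟨1, h1⟩ with hi1
  have hne : i0 ≠ i1 := by simp [hi0, hi1, Fin.ext_iff]
  set e0 : Fin d → ℝ := Pi.single i0 1 with he0
  set y : Fin d → ℝ := Pi.single i1 1 with hy
  -- the function h t = G (t • e0) i1 i1
  set h : ℝ → ℝ := fun t => G (t • e0) i1 i1 with hh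
  -- projMat kills y in both slots
  have hProw : ∀ t : ℝ, ∀ i, projMat d (t • e0) i i1 = 0 := by
    intro t i
    have h2 : (t • e0) i1 = 0 := by
      simp [he0, Pi.single_apply, hne]
    simp only [projMat, Matrix.of_apply]
    rw [h2, mul_zero, zero_div]
  have hPcol : ∀ t : ℝ, ∀ j, projMat d (t • e0) i1 j = 0 := by
    intro t j
    have h2 : (t • e0) i1 = 0 := by
      simp [he0, Pi.single_apply, hne]
    simp only [projMat, Matrix.of_apply]
    rw [h2, zero_mul, zero_div]
  have hQmul : ∀ t : ℝ, (1 - projMat d (t • e0)).mulVec y = y := by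
    intro t
    funext i
    rw [hy, Matrix.mulVec_single]
    by_cases hii : i = i1
    · simp [Matrix.sub_apply, Matrix.one_apply, hProw t, Pi.single_apply, hii]
    · have hii' : ¬ i1 = i := fun hq => hii hq.symm
      simp [Matrix.sub_apply, Matrix.one_apply, hProw t, Pi.single_apply, hii, hii']
  have hQvec : ∀ t : ℝ, Matrix.vecMul y (1 - projMat d (t • e0)) = y := by
    intro t
    funext j
    rw [hy, Matrix.single_vecMul]
    by_cases hjj : j = i1
    · simp [Matrix.sub_apply, Matrix.one_apply, hPcol t, Pi.single_apply, hjj]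
    · have hjj' : ¬ i1 = j := fun hq => hjj hq.symm
      simp [Matrix.sub_apply, Matrix.one_apply, hPcol t, Pi.single_apply, hjj, hjj']
  -- reduction of the sandwiched quadratic form to the (i1,i1) entry
  have hsand : ∀ t : ℝ, ∀ M : Matrix (Fin d) (Fin d) ℝ,
      dotProduct y
        (((1 - projMat d (t • e0)) * M * (1 - projMat d (t • e0))).mulVec y) = M i1 i1 := by
    intro t M
    rw [Matrix.dotProduct_mulVec, ← Matrix.vecMul_vecMul, ← Matrix.vecMul_vecMul, hQvec t]
    rw [← Matrix.dotProduct_mulVec, hQmul t]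
    rw [hy, Matrix.single_vecMul]
    simp [dotProduct_single]
  -- t • e0 ≠ 0 for t ≠ 0
  have hz : ∀ t : ℝ, t ≠ 0 → t • e0 ≠ (0 : Fin d → ℝ) := by
    intro t ht hcon
    have := congrFun hcon i0
    simp [he0, Pi.single_apply] at this
    exact ht this
  -- derivative of h
  have hder : ∀ t : ℝ, HasDerivAt h (fderiv ℝ (fun w => G w i1 i1) (t • e0) e0) t := by
    intro t
    have h1' : HasDerivAt (fun s : ℝ => s • e0) e0 t := by
      simpa using (hasDerivAt_id t).smul_const e0
    exact ((hGdiff i1 i1) (t • e0)).hasFDerivAt.comp_hasDerivAt t h1'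
  have hderiv : ∀ t : ℝ, deriv h t = fderiv ℝ (fun w => G w i1 i1) (t • e0) e0 := fun t =>
    (hder t).deriv
  -- the key differential inequality
  have hkey : ∀ t : ℝ, 0 < t → cbar * h t ≤ h t + (1 / 2) * (t * deriv h t) := by
    intro t ht
    have := hconv (t • e0) (hz t ht.ne') y
    rw [hsand t, hsand t] at this
    have hentry : (G (t • e0) + (1 / 2 : ℝ) •
        Matrix.of fun i j => fderiv ℝ (fun w => G w i j) (t • e0) (t • e0)) i1 i1
        = h t + (1 / 2) * (t * deriv h t) := by
      rw [Matrix.add_apply, Matrix.smul_apply, Matrix.of_apply, hderiv t]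
      have : (fderiv ℝ (fun w => G w i1 i1) (t • e0)) (t • e0)
          = t * (fderiv ℝ (fun w => G w i1 i1) (t • e0)) e0 := by
        rw [map_smul]; simp
      rw [this, smul_eq_mul]
    rw [hentry] at this
    exact this
  -- bounds on h
  have hbound : ∀ t : ℝ, a ≤ h t ∧ h t ≤ b := by
    intro t
    have hsum : (∑ i, y i ^ 2) = 1 := by
      rw [hy]
      simp [Pi.single_apply, sq]
    have hdp : dotProduct y ((G (t • e0)).mulVec y) = h t := by
      rw [hy, Matrix.mulVec_single, hh]
      simp [dotProduct_single]
    have := hell (t • e0) y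
    rw [hsum, hdp] at this
    constructor <;> linarith [this.1, this.2]
  have hab : a ≤ b := le_trans (hbound 0).1 (hbound 0).2
  -- the monotone comparison function
  set ε : ℝ := 2 * (cbar - 1) * a with hε
  have hεpos : 0 < ε := by
    have : 0 < cbar - 1 := by linarith
    positivity
  set F : ℝ → ℝ := fun t => h t - ε * Real.log t with hF
  have hFmono : MonotoneOn F (Set.Ici 1) := by
    apply monotoneOn_of_deriv_nonneg (convex_Ici 1)
    · apply ContinuousOn.sub
      · exact fun t _ => ((hder t).differentiableAt.continuousAt).continuousWithinAt
      · apply ContinuousOn.mul continuousOn_const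
        apply ContinuousOn.log continuousOn_id
        intro t ht
        exact ne_of_gt (lt_of_lt_of_le one_pos ht)
    · intro t ht
      rw [interior_Ici] at ht
      have htpos : (0:ℝ) < t := lt_trans one_pos ht
      exact ((hder t).differentiableAt.sub
        ((Real.hasDerivAt_log htpos.ne').differentiableAt.const_mul ε)).differentiableWithinAt
    · intro t ht
      rw [interior_Ici] at ht
      have htpos : (0:ℝ) < t := lt_trans one_pos ht
      have hFd : HasDerivAt F ((fderiv ℝ (fun w => G w i1 i1) (t • e0)) e0 - ε * t⁻¹) t :=
        (hder t).sub ((Real.hasDerivAt_log htpos.ne').const_mul ε)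
      have hdF := hFd.deriv
      rw [← hderiv t] at hdF
      rw [hdF]
      have hk := hkey t htpos
      have hha := (hbound t).1
      have hcb : 0 < cbar - 1 := by linarith
      rw [sub_nonneg]
      rw [hε]
      have h2 : 2 * (cbar - 1) * h t ≤ t * deriv h t := by linarith
      have h3 : 2 * (cbar - 1) * a ≤ t * deriv h t := by nlinarith
      calc 2 * (cbar - 1) * a * t⁻¹ ≤ (t * deriv h t) * t⁻¹ := by
            apply mul_le_mul_of_nonneg_right h3 (le_of_lt (inv_pos.mpr htpos))
        _ = deriv h t := by field_simp
  -- evaluate at T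
  set T : ℝ := Real.exp ((b - a) / ε + 1) with hT
  have hT1 : (1:ℝ) ≤ T := by
    rw [hT]
    apply Real.one_le_exp
    have : 0 ≤ (b - a) / ε := div_nonneg (by linarith) hεpos.le
    linarith
  have hlogT : Real.log T = (b - a) / ε + 1 := by rw [hT, Real.log_exp]
  have hFle := hFmono (Set.mem_Ici.mpr le_rfl) (Set.mem_Ici.mpr hT1) hT1
  rw [hF] at hFle
  simp only [Real.log_one, mul_zero, sub_zero] at hFle
  rw [hlogT] at hFle
  have hεdiv : ε * ((b - a) / ε + 1) = (b - a) + ε := by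
    field_simp
  have hhb : h T ≤ b := (hbound T).2
  have hha1 : a ≤ h 1 := (hbound 1).1
  nlinarith [hFle, hεdiv]
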